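/- Let σ₁, σ₂, σ₃ > 0 with ρ := σ₃²/(σ₁σ₂) < 1. Then ∫_{ℝ} ∫_{−∞}^0 ∫_{−∞}^0 (σ₁σ₂ z₁z₂ − σ₃² z₃²) · 1_{σ₁σ₂ z₁z₂ − σ₃² z₃² > 0} · φ(z₃) · P_ρ(z₁,z₂) dz₁ dz₂ dz₃ = 2 ∫_{ℝ²} g(z₁, z₂, 0 | σ₁², σ₂², σ₃²) · P_ρ(z₁,z₂) dz₁ dz₂. (This evaluates the denominator J₁ = E[|det(∇²X)| 1_{∇²X ≺ 0}] in the peak height density of a planar stationary Gaussian field whose Hessian entries (X₁₁, X₂₂, X₁₂) are centered Gaussian with variances σ₁², σ₂², σ₃², with X₁₂ independent of (X₁₁, X₂₂) and E[X₁₁X₂₂] = σ₃².) -/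

import Mathlib

open MeasureTheory Real

/-- The standard normal pdf. -/
noncomputable def stdPdf (x : ℝ) : ℝ := (Real.sqrt (2 * Real.pi))⁻¹ * Real.exp (-x ^ 2 / 2)

/-- The standard normal cdf. -/
noncomputable def stdCdf (x : ℝ) : ℝ := ∫ s in Set.Iio x, stdPdf s

/-- The joint density of a standard bivariate normal vector with correlation ρ. -/
noncomputable def binormPdf (ρ x y : ℝ) : ℝ :=
  (2 * Real.pi * Real.sqrt (1 - ρ ^ 2))⁻¹ *
    Real.exp (-(x ^ 2 - 2 * ρ * x * y + y ^ 2) / (2 * (1 - ρ ^ 2)))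

/-- The function `g(z₁, z₂, x | a₁², a₂², a₃²)`, where `a₁, a₂, a₃ > 0` are the (unsquared)
parameters and `b = a₃²/(a₁a₂)`. -/
noncomputable def gFun (z₁ z₂ x a₁ a₂ a₃ : ℝ) : ℝ :=
  a₁ * a₂ *
      (((z₁ - x / a₁) * (z₂ - x / a₂) - a₃ ^ 2 / (a₁ * a₂)) *
          (stdCdf (Real.sqrt ((z₁ - x / a₁) * (z₂ - x / a₂) / (a₃ ^ 2 / (a₁ * a₂)))) - 1 / 2) +
        Real.sqrt (a₃ ^ 2 / (a₁ * a₂) * ((z₁ - x / a₁) * (z₂ - x / a₂))) *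
          stdPdf (Real.sqrt ((z₁ - x / a₁) * (z₂ - x / a₂) / (a₃ ^ 2 / (a₁ * a₂))))) *
    (if z₁ < x / a₁ then (1 : ℝ) else 0) * (if z₂ < x / a₂ then (1 : ℝ) else 0)


open Set

lemma stdPdf_nonneg (x : ℝ) : 0 ≤ stdPdf x :=
  mul_nonneg (inv_nonneg.2 (Real.sqrt_nonneg _)) (Real.exp_nonneg _)

lemma stdPdf_neg (x : ℝ) : stdPdf (-x) = stdPdf x := by simp [stdPdf, neg_sq]

lemma continuous_stdPdf : Continuous stdPdf := by
  unfold stdPdf; fun_prop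

lemma stdPdf_eq (x : ℝ) : stdPdf x = (Real.sqrt (2 * Real.pi))⁻¹ * Real.exp (-(1/2) * x ^ 2) := by
  unfold stdPdf; ring_nf

lemma integrable_stdPdf : Integrable stdPdf := by
  rw [show stdPdf = fun x => (Real.sqrt (2 * Real.pi))⁻¹ * Real.exp (-(1/2) * x ^ 2) from funext stdPdf_eq]
  exact (integrable_exp_neg_mul_sq (by norm_num : (0:ℝ) < 1/2)).const_mul _

lemma integral_stdPdf : ∫ x, stdPdf x = 1 := by
  simp_rw [stdPdf_eq]
  rw [integral_const_mul, integral_gaussian]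
  rw [show Real.pi / (1/2) = 2 * Real.pi by ring]
  exact inv_mul_cancel₀ (by positivity)

lemma hasDerivAt_stdPdf (x : ℝ) : HasDerivAt stdPdf (-x * stdPdf x) x := by
  have h1 : HasDerivAt (fun y : ℝ => -y ^ 2 / 2) (-x) x := by
    have := ((hasDerivAt_pow 2 x).neg).div_const 2
    refine this.congr_deriv ?_; simp; ring
  have h2 := (h1.exp).const_mul (Real.sqrt (2 * Real.pi))⁻¹
  refine HasDerivAt.congr_deriv (f := stdPdf) h2 ?_
  unfold stdPdf; ring

lemma stdCdf_sub (a b : ℝ) (h : a ≤ b) : stdCdf b - stdCdf a = ∫ x in a..b, stdPdf x := by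
  unfold stdCdf
  rw [← integral_Iic_eq_integral_Iio, ← integral_Iic_eq_integral_Iio,
    intervalIntegral.integral_Iic_sub_Iic integrable_stdPdf.integrableOn integrable_stdPdf.integrableOn,
    intervalIntegral.integral_of_le h]

lemma hasDerivAt_stdCdf (x : ℝ) : HasDerivAt stdCdf (stdPdf x) x := by
  have key : ∀ y : ℝ, stdCdf y = (∫ t in (0:ℝ)..y, stdPdf t) + stdCdf 0 := by
    intro y
    rcases le_total 0 y with h | h
    · rw [← stdCdf_sub 0 y h]; ring
    · rw [intervalIntegral.integral_symm, ← stdCdf_sub y 0 h]; ring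
  have : HasDerivAt (fun y : ℝ => (∫ t in (0:ℝ)..y, stdPdf t) + stdCdf 0) (stdPdf x) x := by
    refine HasDerivAt.add_const _ ?_
    exact intervalIntegral.integral_hasDerivAt_right
      (integrable_stdPdf.intervalIntegrable)
      (continuous_stdPdf.stronglyMeasurableAtFilter _ _)
      continuous_stdPdf.continuousAt
  exact this.congr_of_eventuallyEq (Filter.Eventually.of_forall key)

lemma stdCdf_neg (t : ℝ) : stdCdf (-t) = 1 - stdCdf t := by
  have h1 : stdCdf (-t) = ∫ x in Ioi t, stdPdf x := by
    unfold stdCdf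
    rw [← integral_Iic_eq_integral_Iio, ← integral_comp_neg_Ioi]
    simp_rw [stdPdf_neg]
  have h2 : stdCdf t + (∫ x in Ioi t, stdPdf x) = 1 := by
    unfold stdCdf
    rw [← integral_Iic_eq_integral_Iio,
      intervalIntegral.integral_Iic_add_Ioi integrable_stdPdf.integrableOn integrable_stdPdf.integrableOn,
      integral_stdPdf]
  linarith [h1, h2]

lemma key1 {p σ : ℝ} (hp : 0 < p) (hσ : 0 < σ) :
    (∫ z : ℝ, (p - σ ^ 2 * z ^ 2) * (if p - σ ^ 2 * z ^ 2 > 0 then (1:ℝ) else 0) * stdPdf z)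
      = (p - σ ^ 2) * (2 * stdCdf (Real.sqrt p / σ) - 1)
        + 2 * σ ^ 2 * (Real.sqrt p / σ) * stdPdf (Real.sqrt p / σ) := by
  set t : ℝ := Real.sqrt p / σ with ht
  have htpos : 0 < t := div_pos (Real.sqrt_pos.2 hp) hσ
  have ht2 : σ ^ 2 * t ^ 2 = p := by
    rw [ht]; rw [div_pow, Real.sq_sqrt hp.le]; field_simp
  have hmem : ∀ z : ℝ, (p - σ ^ 2 * z ^ 2 > 0) ↔ z ∈ Ioo (-t) t := by
    intro z
    simp only [Set.mem_Ioo]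
    constructor
    · intro h
      have hz2 : z ^ 2 < t ^ 2 := by nlinarith [pow_pos hσ 2]
      constructor <;> nlinarith [htpos]
    · rintro ⟨h1, h2⟩
      have hz2 : z ^ 2 < t ^ 2 := by nlinarith
      nlinarith [pow_pos hσ 2]
  have hind : (fun z : ℝ => (p - σ ^ 2 * z ^ 2) * (if p - σ ^ 2 * z ^ 2 > 0 then (1:ℝ) else 0) * stdPdf z)
      = Set.indicator (Ioo (-t) t) (fun z => (p - σ ^ 2 * z ^ 2) * stdPdf z) := by
    funext z
    by_cases h : p - σ ^ 2 * z ^ 2 > 0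
    · rw [Set.indicator_of_mem ((hmem z).1 h), if_pos h, mul_one]
    · rw [Set.indicator_of_notMem (fun hm => h ((hmem z).2 hm)), if_neg h, mul_zero, zero_mul]
  rw [hind, integral_indicator measurableSet_Ioo, ← integral_Ioc_eq_integral_Ioo,
    ← intervalIntegral.integral_of_le (by linarith : -t ≤ t)]
  have hderiv : ∀ z ∈ Set.uIcc (-t) t,
      HasDerivAt (fun y : ℝ => (p - σ ^ 2) * stdCdf y + σ ^ 2 * (y * stdPdf y))
        ((p - σ ^ 2 * z ^ 2) * stdPdf z) z := by
    intro z _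
    have h1 := (hasDerivAt_stdCdf z).const_mul (p - σ ^ 2)
    have h2 := (((hasDerivAt_id z).mul (hasDerivAt_stdPdf z))).const_mul (σ ^ 2)
    refine (h1.add h2).congr_deriv ?_
    simp only [id_eq, one_mul]
    ring
  rw [intervalIntegral.integral_eq_sub_of_hasDerivAt hderiv
    (((continuous_const.sub (continuous_const.mul (continuous_pow 2))).mul
      continuous_stdPdf).intervalIntegrable _ _)]
  rw [stdCdf_neg, stdPdf_neg]
  ring

lemma binorm_nonneg (ρ x y : ℝ) : 0 ≤ binormPdf ρ x y := by
  unfold binormPdf; positivity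

lemma binorm_bound {ρ : ℝ} (h0 : 0 ≤ ρ) (h1 : ρ < 1) (x y : ℝ) :
    binormPdf ρ x y ≤ (2 * Real.pi * Real.sqrt (1 - ρ ^ 2))⁻¹ *
      (Real.exp (-(1/(2*(1+ρ))) * x ^ 2) * Real.exp (-(1/(2*(1+ρ))) * y ^ 2)) := by
  unfold binormPdf
  have h1ρ : (0:ℝ) < 1 + ρ := by linarith
  have h2d : (0:ℝ) < 2 * (1 - ρ ^ 2) := by nlinarith
  refine mul_le_mul_of_nonneg_left ?_ (by positivity)
  rw [← Real.exp_add]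
  apply Real.exp_le_exp.2
  rw [div_le_iff₀ h2d]
  have heq : (-(1/(2*(1+ρ))) * x ^ 2 + -(1/(2*(1+ρ))) * y ^ 2) * (2 * (1 - ρ ^ 2))
      = -((1-ρ) * (x^2 + y^2)) := by field_simp; ring
  rw [heq]
  nlinarith [sq_nonneg (x - y)]

lemma integrable_abs_exp {c : ℝ} (hc : 0 < c) :
    Integrable (fun x : ℝ => |x| * Real.exp (-c * x ^ 2)) := by
  have : (fun x : ℝ => |x * Real.exp (-c * x ^ 2)|) = fun x => |x| * Real.exp (-c * x ^ 2) :=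
    funext fun x => by rw [abs_mul, abs_of_pos (Real.exp_pos _)]
  rw [← this]
  exact (integrable_mul_exp_neg_mul_sq hc).abs

lemma gFun_eval {σ₁ σ₂ σ₃ z₁ z₂ : ℝ} (h₁ : 0 < σ₁) (h₂ : 0 < σ₂) (h₃ : 0 < σ₃)
    (hz₁ : z₁ < 0) (hz₂ : z₂ < 0) :
    (σ₁ * σ₂ * z₁ * z₂ - σ₃ ^ 2) * (2 * stdCdf (Real.sqrt (σ₁ * σ₂ * z₁ * z₂) / σ₃) - 1)
      + 2 * σ₃ ^ 2 * (Real.sqrt (σ₁ * σ₂ * z₁ * z₂) / σ₃) * stdPdf (Real.sqrt (σ₁ * σ₂ * z₁ * z₂) / σ₃)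
    = 2 * gFun z₁ z₂ 0 σ₁ σ₂ σ₃ := by
  have hp : 0 < σ₁ * σ₂ * z₁ * z₂ := by nlinarith [mul_pos h₁ h₂, mul_pos_of_neg_of_neg hz₁ hz₂]
  set q : ℝ := Real.sqrt (σ₁ * σ₂ * z₁ * z₂) with hqdef
  have hq2 : q ^ 2 = σ₁ * σ₂ * z₁ * z₂ := Real.sq_sqrt hp.le
  have hqpos : 0 < q := Real.sqrt_pos.2 hp
  have h_t : Real.sqrt (z₁ * z₂ / (σ₃ ^ 2 / (σ₁ * σ₂))) = q / σ₃ := by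
    rw [show z₁ * z₂ / (σ₃ ^ 2 / (σ₁ * σ₂)) = (q / σ₃) ^ 2 by
      rw [div_pow, hq2]; field_simp]
    exact Real.sqrt_sq (by positivity)
  have h_s : Real.sqrt (σ₃ ^ 2 / (σ₁ * σ₂) * (z₁ * z₂)) = σ₃ * q / (σ₁ * σ₂) := by
    rw [show σ₃ ^ 2 / (σ₁ * σ₂) * (z₁ * z₂) = (σ₃ * q / (σ₁ * σ₂)) ^ 2 by
      rw [div_pow, mul_pow, hq2]; field_simp]
    exact Real.sqrt_sq (by positivity)
  unfold gFun
  simp only [zero_div, sub_zero, if_pos hz₁, if_pos hz₂, mul_one]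
  rw [h_t, h_s]
  field_simp

theorem stmt_5 (σ₁ σ₂ σ₃ : ℝ) (h₁ : 0 < σ₁) (h₂ : 0 < σ₂) (h₃ : 0 < σ₃)
    (hρ : σ₃ ^ 2 / (σ₁ * σ₂) < 1) :
    (∫ z₃ : ℝ, ∫ z₂ in Set.Iio (0 : ℝ), ∫ z₁ in Set.Iio (0 : ℝ),
        (σ₁ * σ₂ * z₁ * z₂ - σ₃ ^ 2 * z₃ ^ 2) *
          (if σ₁ * σ₂ * z₁ * z₂ - σ₃ ^ 2 * z₃ ^ 2 > 0 then (1 : ℝ) else 0) *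
          stdPdf z₃ * binormPdf (σ₃ ^ 2 / (σ₁ * σ₂)) z₁ z₂) =
      2 * ∫ z : ℝ × ℝ, gFun z.1 z.2 0 σ₁ σ₂ σ₃ * binormPdf (σ₃ ^ 2 / (σ₁ * σ₂)) z.1 z.2 := by
  set ρ : ℝ := σ₃ ^ 2 / (σ₁ * σ₂) with hρdef
  have hρ0 : 0 < ρ := by positivity
  have hα : (0:ℝ) < 1/(2*(1+ρ)) := by positivity
  set μ : Measure ℝ := volume.restrict (Set.Iio (0:ℝ)) with hμdef
  set T : ℝ × ℝ × ℝ → ℝ := fun q =>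
    (σ₁ * σ₂ * q.2.2 * q.2.1 - σ₃ ^ 2 * q.1 ^ 2) *
      (if σ₁ * σ₂ * q.2.2 * q.2.1 - σ₃ ^ 2 * q.1 ^ 2 > 0 then (1 : ℝ) else 0) *
      stdPdf q.1 * binormPdf ρ q.2.2 q.2.1 with hTdef
  -- measurability
  have hcontA : Continuous fun q : ℝ × ℝ × ℝ => σ₁ * σ₂ * q.2.2 * q.2.1 - σ₃ ^ 2 * q.1 ^ 2 := by
    fun_prop
  have hcontB : Continuous fun q : ℝ × ℝ × ℝ => binormPdf ρ q.2.2 q.2.1 := by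
    unfold binormPdf; fun_prop
  have hmT : Measurable T := by
    refine (((hcontA.measurable.mul ?_).mul
      (continuous_stdPdf.measurable.comp measurable_fst)).mul hcontB.measurable)
    exact Measurable.ite (measurableSet_lt measurable_const hcontA.measurable)
      measurable_const measurable_const
  -- integrability
  have hgint : Integrable (fun x : ℝ => |x| * Real.exp (-(1/(2*(1+ρ))) * x ^ 2)) μ :=
    (integrable_abs_exp hα).restrict
  have hD : Integrable (fun q : ℝ × ℝ × ℝ =>
      stdPdf q.1 * ((σ₁ * σ₂ * (2 * Real.pi * Real.sqrt (1 - ρ ^ 2))⁻¹) *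
        ((|q.2.1| * Real.exp (-(1/(2*(1+ρ))) * q.2.1 ^ 2)) *
         (|q.2.2| * Real.exp (-(1/(2*(1+ρ))) * q.2.2 ^ 2))))) (volume.prod (μ.prod μ)) := by
    exact Integrable.mul_prod integrable_stdPdf ((Integrable.mul_prod hgint hgint).const_mul _)
  have hT : Integrable T (volume.prod (μ.prod μ)) := by
    refine Integrable.mono' hD hmT.aestronglyMeasurable (Filter.Eventually.of_forall fun q => ?_)
    have hstep1 : ‖T q‖ = |(σ₁ * σ₂ * q.2.2 * q.2.1 - σ₃ ^ 2 * q.1 ^ 2) *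
        (if σ₁ * σ₂ * q.2.2 * q.2.1 - σ₃ ^ 2 * q.1 ^ 2 > 0 then (1 : ℝ) else 0)| *
        stdPdf q.1 * binormPdf ρ q.2.2 q.2.1 := by
      rw [hTdef]
      simp only [Real.norm_eq_abs]
      rw [abs_mul, abs_mul, abs_of_nonneg (stdPdf_nonneg _), abs_of_nonneg (binorm_nonneg _ _ _)]
    have habs : |(σ₁ * σ₂ * q.2.2 * q.2.1 - σ₃ ^ 2 * q.1 ^ 2) *
        (if σ₁ * σ₂ * q.2.2 * q.2.1 - σ₃ ^ 2 * q.1 ^ 2 > 0 then (1 : ℝ) else 0)|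
        ≤ σ₁ * σ₂ * (|q.2.1| * |q.2.2|) := by
      by_cases h : σ₁ * σ₂ * q.2.2 * q.2.1 - σ₃ ^ 2 * q.1 ^ 2 > 0
      · rw [if_pos h, mul_one, abs_of_pos h]
        have h2 : σ₁ * σ₂ * q.2.2 * q.2.1 ≤ σ₁ * σ₂ * (|q.2.1| * |q.2.2|) := by
          have := le_abs_self (q.2.1 * q.2.2)
          have habsmul : |q.2.1 * q.2.2| = |q.2.1| * |q.2.2| := abs_mul _ _
          nlinarith [mul_pos h₁ h₂]
        nlinarith [sq_nonneg q.1, sq_nonneg σ₃]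
      · rw [if_neg h, mul_zero, abs_zero]
        positivity
    rw [hstep1]
    have m1 : |(σ₁ * σ₂ * q.2.2 * q.2.1 - σ₃ ^ 2 * q.1 ^ 2) *
        (if σ₁ * σ₂ * q.2.2 * q.2.1 - σ₃ ^ 2 * q.1 ^ 2 > 0 then (1 : ℝ) else 0)| *
        stdPdf q.1 ≤ (σ₁ * σ₂ * (|q.2.1| * |q.2.2|)) * stdPdf q.1 :=
      mul_le_mul_of_nonneg_right habs (stdPdf_nonneg _)
    calc |(σ₁ * σ₂ * q.2.2 * q.2.1 - σ₃ ^ 2 * q.1 ^ 2) *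
        (if σ₁ * σ₂ * q.2.2 * q.2.1 - σ₃ ^ 2 * q.1 ^ 2 > 0 then (1 : ℝ) else 0)| *
        stdPdf q.1 * binormPdf ρ q.2.2 q.2.1
        ≤ (σ₁ * σ₂ * (|q.2.1| * |q.2.2|)) * stdPdf q.1 *
          ((2 * Real.pi * Real.sqrt (1 - ρ ^ 2))⁻¹ *
            (Real.exp (-(1/(2*(1+ρ))) * q.2.2 ^ 2) * Real.exp (-(1/(2*(1+ρ))) * q.2.1 ^ 2))) :=
          mul_le_mul m1 (binorm_bound hρ0.le hρ _ _) (binorm_nonneg _ _ _)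
            (mul_nonneg (by positivity) (stdPdf_nonneg _))
      _ = stdPdf q.1 * ((σ₁ * σ₂ * (2 * Real.pi * Real.sqrt (1 - ρ ^ 2))⁻¹) *
          ((|q.2.1| * Real.exp (-(1/(2*(1+ρ))) * q.2.1 ^ 2)) *
           (|q.2.2| * Real.exp (-(1/(2*(1+ρ))) * q.2.2 ^ 2)))) := by ring
  -- step 1: collapse the inner double integral into a product integral
  have step1 : (∫ z₃ : ℝ, ∫ z₂ in Set.Iio (0 : ℝ), ∫ z₁ in Set.Iio (0 : ℝ),
        (σ₁ * σ₂ * z₁ * z₂ - σ₃ ^ 2 * z₃ ^ 2) *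
          (if σ₁ * σ₂ * z₁ * z₂ - σ₃ ^ 2 * z₃ ^ 2 > 0 then (1 : ℝ) else 0) *
          stdPdf z₃ * binormPdf ρ z₁ z₂)
      = ∫ z₃ : ℝ, ∫ w, T (z₃, w) ∂(μ.prod μ) := by
    refine integral_congr_ae ?_
    filter_upwards [hT.prod_right_ae] with z₃ h
    exact (integral_prod _ h).symm
  rw [step1, integral_integral_swap hT]
  -- step 2: evaluate the inner z₃ integral a.e.
  have hsprod : μ.prod μ = (volume.prod volume).restrict (Set.Iio (0:ℝ) ×ˢ Set.Iio (0:ℝ)) := by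
    rw [hμdef, Measure.prod_restrict]
  have step2 : (∫ w, (∫ z₃ : ℝ, T (z₃, w)) ∂(μ.prod μ))
      = ∫ w, (2 * gFun w.2 w.1 0 σ₁ σ₂ σ₃ * binormPdf ρ w.2 w.1) ∂(μ.prod μ) := by
    refine integral_congr_ae ?_
    have hmem : ∀ᵐ w ∂(μ.prod μ), w ∈ Set.Iio (0:ℝ) ×ˢ Set.Iio (0:ℝ) := by
      rw [hsprod]
      exact ae_restrict_mem (measurableSet_Iio.prod measurableSet_Iio)
    filter_upwards [hmem] with w hw
    obtain ⟨hw1, hw2⟩ := hw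
    have hp : 0 < σ₁ * σ₂ * w.2 * w.1 := by
      nlinarith [mul_pos h₁ h₂, mul_pos_of_neg_of_neg (Set.mem_Iio.1 hw2) (Set.mem_Iio.1 hw1)]
    have : (fun z₃ : ℝ => T (z₃, w)) = fun z₃ : ℝ =>
        ((σ₁ * σ₂ * w.2 * w.1 - σ₃ ^ 2 * z₃ ^ 2) *
          (if σ₁ * σ₂ * w.2 * w.1 - σ₃ ^ 2 * z₃ ^ 2 > 0 then (1 : ℝ) else 0) *
          stdPdf z₃) * binormPdf ρ w.2 w.1 := by
      funext z₃; rw [hTdef]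
    rw [this, integral_mul_const, key1 hp h₃,
      gFun_eval h₁ h₂ h₃ (Set.mem_Iio.1 hw2) (Set.mem_Iio.1 hw1)]
  rw [step2]
  -- step 3: extend to the full plane
  have step3 : (∫ w, (2 * gFun w.2 w.1 0 σ₁ σ₂ σ₃ * binormPdf ρ w.2 w.1) ∂(μ.prod μ))
      = ∫ w : ℝ × ℝ, 2 * gFun w.2 w.1 0 σ₁ σ₂ σ₃ * binormPdf ρ w.2 w.1 ∂(volume.prod volume) := by
    rw [hsprod]
    refine setIntegral_eq_integral_of_forall_compl_eq_zero fun w hw => ?_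
    simp only [Set.mem_prod, Set.mem_Iio, not_and_or, not_lt] at hw
    have hz : gFun w.2 w.1 0 σ₁ σ₂ σ₃ = 0 := by
      rcases hw with h | h
      · unfold gFun
        rw [if_neg (show ¬ (w.1 < 0 / σ₂) by rw [zero_div]; exact not_lt.2 h)]
        ring
      · unfold gFun
        rw [if_neg (show ¬ (w.2 < 0 / σ₁) by rw [zero_div]; exact not_lt.2 h)]
        ring
    rw [hz]; ring
  rw [step3]
  -- step 4: swap coordinates and identify with the RHS
  have step4 : (∫ w : ℝ × ℝ, 2 * gFun w.2 w.1 0 σ₁ σ₂ σ₃ * binormPdf ρ w.2 w.1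
        ∂(volume.prod volume))
      = 2 * ∫ z : ℝ × ℝ, gFun z.1 z.2 0 σ₁ σ₂ σ₃ * binormPdf ρ z.1 z.2
        ∂(volume.prod volume) := by
    rw [← integral_prod_swap (fun z : ℝ × ℝ => gFun z.1 z.2 0 σ₁ σ₂ σ₃ * binormPdf ρ z.1 z.2),
      ← integral_const_mul]
    refine integral_congr_ae (Filter.Eventually.of_forall fun w => ?_)
    show 2 * gFun w.2 w.1 0 σ₁ σ₂ σ₃ * binormPdf ρ w.2 w.1
      = 2 * (gFun w.2 w.1 0 σ₁ σ₂ σ₃ * binormPdf ρ w.2 w.1)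
    ring
  rw [step4]
  rfl
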